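/- arXiv:1909.03419 — 2 statements merged into one kernel-verified Lean document; each statement's English description precedes it below -/
import Mathlib

section
/- Assume ξ_i ≥ 0, ξ_j ≥ 0, ξ_k ≥ 0, and let c be a positive real. Then the sum of hyperbolic inner angles ϑ_i(r_i, r_j, r_k) + ϑ_j(r_i, r_j, r_k) tends to π as (r_i, r_j, r_k) tends to (0, 0, c) within the open positive octant (0,∞)³. -/
/-- `hypCosh I rj rk` is the hyperbolic cosine of the side length `l_i` of
the hyperbolic three-circle configuration:
`cosh l_i = cosh r_j · cosh r_k + I_i · sinh r_j · sinh r_k`. -/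
noncomputable def hypCosh (I rj rk : ℝ) : ℝ :=
  Real.cosh rj * Real.cosh rk + I * Real.sinh rj * Real.sinh rk

/-- The hyperbolic inner angle `ϑ_i` at the center of the circle of radius `r_i`
in the hyperbolic three-circle configuration with radii `r_i, r_j, r_k` and
cosines of exterior intersection angles `I_i, I_j, I_k`:
`ϑ_i = arccos((cosh l_j · cosh l_k − cosh l_i)/(sinh l_j · sinh l_k))`,
where `sinh l = √(cosh² l − 1)` since `l > 0`.  The angles `ϑ_j, ϑ_k` are
obtained by cyclic permutation of the arguments. -/
noncomputable def hypAngle (Ii Ij Ik ri rj rk : ℝ) : ℝ :=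
  Real.arccos ((hypCosh Ij rk ri * hypCosh Ik ri rj - hypCosh Ii rj rk) /
    (Real.sqrt (hypCosh Ij rk ri ^ 2 - 1) * Real.sqrt (hypCosh Ik ri rj ^ 2 - 1)))

set_option maxHeartbeats 1000000 in
/-- Key polynomial inequality: the symmetric quantity
`Ci² + Cj² + Ck² - 2·Ci·Cj·Ck - 1` is nonpositive. -/
lemma hyp_Q_nonpos (Ii Ij Ik vi vj vk ui uj uk : ℝ)
    (hvi : 0 ≤ vi) (hvj : 0 ≤ vj) (hvk : 0 ≤ vk)
    (hui : 0 ≤ ui) (huj : 0 ≤ uj) (huk : 0 ≤ uk)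
    (ei : ui^2 = vi^2 + 1) (ej : uj^2 = vj^2 + 1) (ek : uk^2 = vk^2 + 1)
    (hIi : |Ii| ≤ 1) (hIj : |Ij| ≤ 1) (hIk : |Ik| ≤ 1)
    (hξi : 0 ≤ Ii + Ij*Ik) (hξj : 0 ≤ Ij + Ik*Ii) (hξk : 0 ≤ Ik + Ii*Ij) :
    (uj*uk + Ii*vj*vk)^2 + (uk*ui + Ij*vk*vi)^2 + (ui*uj + Ik*vi*vj)^2
      ≤ 1 + 2*(uj*uk + Ii*vj*vk)*(uk*ui + Ij*vk*vi)*(ui*uj + Ik*vi*vj) := by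
  obtain ⟨hIi1, hIi2⟩ := abs_le.1 hIi
  obtain ⟨hIj1, hIj2⟩ := abs_le.1 hIj
  obtain ⟨hIk1, hIk2⟩ := abs_le.1 hIk
  have habs : |Ii*Ij*Ik| ≤ 1 := by
    rw [abs_mul, abs_mul]
    exact mul_le_one₀ (mul_le_one₀ hIi (abs_nonneg _) hIj) (abs_nonneg _) hIk
  have hprod : 0 ≤ 1 + Ii*Ij*Ik := by
    have := neg_abs_le (Ii*Ij*Ik); linarith
  have hT : 0 ≤ vj^2*vk^2*(1-Ii^2) + vi^2*vk^2*(1-Ij^2) + vi^2*vj^2*(1-Ik^2)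
      + 2*vi*vj*vk^2*ui*uj*(Ik+Ii*Ij) + 2*vi*vj^2*vk*ui*uk*(Ij+Ii*Ik)
      + 2*vi^2*vj*vk*uj*uk*(Ii+Ij*Ik) + 2*vi^2*vj^2*vk^2*(1+Ii*Ij*Ik) := by
    have h1 : 0 ≤ 1 - Ii^2 := by nlinarith
    have h2 : 0 ≤ 1 - Ij^2 := by nlinarith
    have h3 : 0 ≤ 1 - Ik^2 := by nlinarith
    have hξk' : 0 ≤ Ik + Ii*Ij := hξk
    have hξj' : 0 ≤ Ij + Ii*Ik := by nlinarith [hξj]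
    have hξi' : 0 ≤ Ii + Ij*Ik := hξi
    positivity
  have hid : (uj*uk + Ii*vj*vk)^2 + (uk*ui + Ij*vk*vi)^2 + (ui*uj + Ik*vi*vj)^2
      - 2*(uj*uk + Ii*vj*vk)*(uk*ui + Ij*vk*vi)*(ui*uj + Ik*vi*vj) - 1
      + (vj^2*vk^2*(1-Ii^2) + vi^2*vk^2*(1-Ij^2) + vi^2*vj^2*(1-Ik^2)
      + 2*vi*vj*vk^2*ui*uj*(Ik+Ii*Ij) + 2*vi*vj^2*vk*ui*uk*(Ij+Ii*Ik)
      + 2*vi^2*vj*vk*uj*uk*(Ii+Ij*Ik) + 2*vi^2*vj^2*vk^2*(1+Ii*Ij*Ik)) = 0 := by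
    linear_combination (uk^2 + uj^2 - 2*uj^2*uk^2 - 2*vj*vk*uj*uk*Ii) * ei
      + (1 - uk^2 - 2*vi*vk*ui*uk*Ij + vi^2 - 2*vi^2*uk^2) * ej
      + (-vj^2 - 2*vi*vj*ui*uj*Ik - vi^2 - 2*vi^2*vj^2) * ek
  linarith

set_option maxHeartbeats 1000000 in
/-- Bounds on the cosines of two angles of a hyperbolic triangle whose side
lengths satisfy the triangle inequalities (encoded by `hQ`). -/
lemma tri_bounds (Ci Cj Ck Si Sj Sk : ℝ) (h1i : 1 < Ci) (h1j : 1 < Cj) (h1k : 1 < Ck)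
    (ESi : Si^2 = Ci^2 - 1) (ESj : Sj^2 = Cj^2 - 1) (ESk : Sk^2 = Ck^2 - 1)
    (hSi : 0 < Si) (hSj : 0 < Sj) (hSk : 0 < Sk)
    (hQ : Ci^2 + Cj^2 + Ck^2 ≤ 1 + 2*Ci*Cj*Ck) :
    |(Cj*Ck - Ci)/(Sj*Sk)| ≤ 1 ∧ |(Ck*Ci - Cj)/(Sk*Si)| ≤ 1 ∧
    0 ≤ (Cj*Ck - Ci)/(Sj*Sk) + (Ck*Ci - Cj)/(Sk*Si) ∧
    (Cj*Ck - Ci)/(Sj*Sk) + (Ck*Ci - Cj)/(Sk*Si)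
      ≤ (Si*Cj + Sj*Ci)*Sk/(Si*Sj*(Ck+1)) := by
  have habsA : |Cj*Ck - Ci| ≤ Sj*Sk := by
    have hss : (Sj*Sk)^2 = (Cj^2-1)*(Ck^2-1) := by rw [mul_pow, ESj, ESk]
    have h2 : (Cj*Ck - Ci)^2 ≤ (Sj*Sk)^2 := by nlinarith
    have hp : 0 < Sj*Sk := mul_pos hSj hSk
    rw [abs_le]
    constructor <;> nlinarith [h2, hp]
  have habsB : |Ck*Ci - Cj| ≤ Sk*Si := by
    have hss : (Sk*Si)^2 = (Ck^2-1)*(Ci^2-1) := by rw [mul_pow, ESk, ESi]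
    have h2 : (Ck*Ci - Cj)^2 ≤ (Sk*Si)^2 := by nlinarith
    have hp : 0 < Sk*Si := mul_pos hSk hSi
    rw [abs_le]
    constructor <;> nlinarith [h2, hp]
  have habsC : |Ci*Cj - Ck| ≤ Si*Sj := by
    have hss : (Si*Sj)^2 = (Ci^2-1)*(Cj^2-1) := by rw [mul_pow, ESi, ESj]
    have h2 : (Ci*Cj - Ck)^2 ≤ (Si*Sj)^2 := by nlinarith
    have hp : 0 < Si*Sj := mul_pos hSi hSj
    rw [abs_le]
    constructor <;> nlinarith [h2, hp]
  have hW0 : Ci*Cj - Si*Sj ≤ Ck := by have := (abs_le.1 habsC).2; linarith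
  have hW1 : 1 ≤ Ci*Cj - Si*Sj := by
    have hss : (Si*Sj)^2 = (Ci^2-1)*(Cj^2-1) := by rw [mul_pow, ESi, ESj]
    have h3 : (Si*Sj)^2 ≤ (Ci*Cj-1)^2 := by nlinarith [sq_nonneg (Ci-Cj)]
    have h4 : 0 < Ci*Cj - 1 := by nlinarith
    nlinarith [h3, h4, mul_pos hSi hSj]
  have hP : 0 < Si*Cj + Sj*Ci :=
    add_pos (mul_pos hSi (by linarith)) (mul_pos hSj (by linarith))
  have hnum : Si*(Cj*Ck - Ci) + Sj*(Ck*Ci - Cj)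
      = (Si*Cj + Sj*Ci)*(Ck - (Ci*Cj - Si*Sj)) := by
    linear_combination (-(Sj*Cj))*ESi + (-(Si*Ci))*ESj
  have hsum : (Cj*Ck - Ci)/(Sj*Sk) + (Ck*Ci - Cj)/(Sk*Si)
      = (Si*Cj + Sj*Ci)*(Ck - (Ci*Cj - Si*Sj))/(Si*Sj*Sk) := by
    rw [← hnum]
    field_simp
  refine ⟨?_, ?_, ?_, ?_⟩
  · rw [abs_div, abs_of_pos (mul_pos hSj hSk), div_le_one (mul_pos hSj hSk)]
    exact habsA
  · rw [abs_div, abs_of_pos (mul_pos hSk hSi), div_le_one (mul_pos hSk hSi)]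
    exact habsB
  · rw [hsum]
    apply div_nonneg _ (by positivity)
    exact mul_nonneg hP.le (by linarith)
  · rw [hsum, div_le_div_iff₀ (by positivity) (by positivity)]
    have hint1 : 0 ≤ ((Si*Cj + Sj*Ci)*(Si*Sj*(Ck+1))) * ((Ci*Cj - Si*Sj) - 1) :=
      mul_nonneg (mul_nonneg hP.le (by positivity)) (by linarith)
    have hEQ : (Si*Cj + Sj*Ci)*(Ck-1)*(Si*Sj*(Ck+1))
        = (Si*Cj + Sj*Ci)*Sk*(Si*Sj*Sk) := by
      linear_combination (-((Si*Cj + Sj*Ci)*(Si*Sj)))*ESk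
    nlinarith [hint1, hEQ]

/-- For `x, y ∈ [0, π]` we have `1 + cos (x + y) ≤ |cos x + cos y|`. -/
lemma cos_sum_bound {x y : ℝ} (hx0 : 0 ≤ x) (hx1 : x ≤ Real.pi)
    (hy0 : 0 ≤ y) (hy1 : y ≤ Real.pi) :
    1 + Real.cos (x + y) ≤ |Real.cos x + Real.cos y| := by
  set s := (x + y) / 2 with hs
  set d := (x - y) / 2 with hd
  have hs0 : 0 ≤ s := by positivity
  have hs1 : s ≤ Real.pi := by simp [hs]; linarith
  have hdle : |d| ≤ s := by
    rw [abs_le]; constructor <;> simp [hd, hs] <;> linarith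
  have hdle2 : |d| ≤ Real.pi - s := by
    rw [abs_le]; constructor <;> simp [hd, hs] <;> linarith
  have hcd : |Real.cos s| ≤ Real.cos d := by
    rw [← Real.cos_abs d, abs_le]
    constructor
    · have := Real.cos_le_cos_of_nonneg_of_le_pi (abs_nonneg d) (by linarith) hdle2
      rw [Real.cos_pi_sub] at this; linarith
    · exact Real.cos_le_cos_of_nonneg_of_le_pi (abs_nonneg d) hs1 hdle
  have hsum : Real.cos x + Real.cos y = 2 * Real.cos s * Real.cos d := by
    rw [show x = s + d by rw [hs, hd]; ring, show y = s - d by rw [hs, hd]; ring,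
      Real.cos_add, Real.cos_sub]
    ring
  have hxy : 1 + Real.cos (x + y) = 2 * Real.cos s ^ 2 := by
    rw [show x + y = 2 * s by rw [hs]; ring, Real.cos_two_mul]; ring
  have hcd0 : 0 ≤ Real.cos d := le_trans (abs_nonneg _) hcd
  rw [hxy, hsum, abs_mul, abs_mul, abs_of_nonneg hcd0, abs_two]
  nlinarith [sq_abs (Real.cos s), abs_nonneg (Real.cos s)]

/-- `hypCosh I a b > 1` when `I > -1` and `a, b > 0`. -/
lemma one_lt_hypCosh {I a b : ℝ} (hI : -1 < I) (ha : 0 < a) (hb : 0 < b) :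
    1 < hypCosh I a b := by
  have h := Real.one_le_cosh (a - b)
  rw [Real.cosh_sub] at h
  have h2 : 0 < (1+I) * (Real.sinh a * Real.sinh b) :=
    mul_pos (by linarith) (mul_pos (by positivity) (by positivity))
  unfold hypCosh
  nlinarith

set_option maxHeartbeats 4000000 in
theorem stmt_14 (Θi Θj Θk : ℝ)
    (hi0 : 0 ≤ Θi) (hi1 : Θi < Real.pi)
    (hj0 : 0 ≤ Θj) (hj1 : Θj < Real.pi)
    (hk0 : 0 ≤ Θk) (hk1 : Θk < Real.pi)
    (hξi : 0 ≤ Real.cos Θi + Real.cos Θj * Real.cos Θk)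
    (hξj : 0 ≤ Real.cos Θj + Real.cos Θk * Real.cos Θi)
    (hξk : 0 ≤ Real.cos Θk + Real.cos Θi * Real.cos Θj)
    (c : ℝ) (hc : 0 < c) :
    Filter.Tendsto
      (fun p : ℝ × ℝ × ℝ =>
        hypAngle (Real.cos Θi) (Real.cos Θj) (Real.cos Θk) p.1 p.2.1 p.2.2
          + hypAngle (Real.cos Θj) (Real.cos Θk) (Real.cos Θi) p.2.1 p.2.2 p.1)
      (nhdsWithin (0, 0, c) (Set.Ioi 0 ×ˢ Set.Ioi 0 ×ˢ Set.Ioi 0))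
      (nhds Real.pi) := by
  set Ii := Real.cos Θi with hIidef
  set Ij := Real.cos Θj with hIjdef
  set Ik := Real.cos Θk with hIkdef
  have hIiabs : |Ii| ≤ 1 := by rw [hIidef]; exact Real.abs_cos_le_one Θi
  have hIjabs : |Ij| ≤ 1 := by rw [hIjdef]; exact Real.abs_cos_le_one Θj
  have hIkabs : |Ik| ≤ 1 := by rw [hIkdef]; exact Real.abs_cos_le_one Θk
  have hIigt : -1 < Ii := by
    have h := Real.cos_lt_cos_of_nonneg_of_le_pi hi0 le_rfl hi1
    rwa [Real.cos_pi] at h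
  have hIjgt : -1 < Ij := by
    have h := Real.cos_lt_cos_of_nonneg_of_le_pi hj0 le_rfl hj1
    rwa [Real.cos_pi] at h
  have hIkgt : -1 < Ik := by
    have h := Real.cos_lt_cos_of_nonneg_of_le_pi hk0 le_rfl hk1
    rwa [Real.cos_pi] at h
  set Sset : Set (ℝ × ℝ × ℝ) := Set.Ioi 0 ×ˢ Set.Ioi 0 ×ˢ Set.Ioi 0 with hSset
  set F := nhdsWithin ((0:ℝ), (0:ℝ), c) Sset with hF
  set A : ℝ × ℝ × ℝ → ℝ := fun p =>
    (hypCosh Ij p.2.2 p.1 * hypCosh Ik p.1 p.2.1 - hypCosh Ii p.2.1 p.2.2) /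
    (Real.sqrt (hypCosh Ij p.2.2 p.1 ^ 2 - 1) * Real.sqrt (hypCosh Ik p.1 p.2.1 ^ 2 - 1))
    with hAdef
  set B : ℝ × ℝ × ℝ → ℝ := fun p =>
    (hypCosh Ik p.1 p.2.1 * hypCosh Ii p.2.1 p.2.2 - hypCosh Ij p.2.2 p.1) /
    (Real.sqrt (hypCosh Ik p.1 p.2.1 ^ 2 - 1) * Real.sqrt (hypCosh Ii p.2.1 p.2.2 ^ 2 - 1))
    with hBdef
  set g : ℝ × ℝ × ℝ → ℝ := fun p =>
    (Real.sqrt (hypCosh Ii p.2.1 p.2.2 ^ 2 - 1) * hypCosh Ij p.2.2 p.1 +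
     Real.sqrt (hypCosh Ij p.2.2 p.1 ^ 2 - 1) * hypCosh Ii p.2.1 p.2.2) *
     Real.sqrt (hypCosh Ik p.1 p.2.1 ^ 2 - 1) /
    (Real.sqrt (hypCosh Ii p.2.1 p.2.2 ^ 2 - 1) * Real.sqrt (hypCosh Ij p.2.2 p.1 ^ 2 - 1) *
     (hypCosh Ik p.1 p.2.1 + 1)) with hgdef
  -- pointwise bounds on the open octant
  have hkey : ∀ p ∈ Sset, |A p| ≤ 1 ∧ |B p| ≤ 1 ∧ 0 ≤ A p + B p ∧ A p + B p ≤ g p := by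
    rintro ⟨ri, rj, rk⟩ hp
    obtain ⟨hri, hrj, hrk⟩ := hp
    have hri' : (0:ℝ) < ri := hri
    have hrj' : (0:ℝ) < rj := hrj
    have hrk' : (0:ℝ) < rk := hrk
    have h1i : 1 < hypCosh Ii rj rk := one_lt_hypCosh hIigt hrj' hrk'
    have h1j : 1 < hypCosh Ij rk ri := one_lt_hypCosh hIjgt hrk' hri'
    have h1k : 1 < hypCosh Ik ri rj := one_lt_hypCosh hIkgt hri' hrj'
    have ESi : Real.sqrt (hypCosh Ii rj rk ^ 2 - 1) ^ 2 = hypCosh Ii rj rk ^ 2 - 1 :=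
      Real.sq_sqrt (by nlinarith)
    have ESj : Real.sqrt (hypCosh Ij rk ri ^ 2 - 1) ^ 2 = hypCosh Ij rk ri ^ 2 - 1 :=
      Real.sq_sqrt (by nlinarith)
    have ESk : Real.sqrt (hypCosh Ik ri rj ^ 2 - 1) ^ 2 = hypCosh Ik ri rj ^ 2 - 1 :=
      Real.sq_sqrt (by nlinarith)
    have hSi : 0 < Real.sqrt (hypCosh Ii rj rk ^ 2 - 1) := Real.sqrt_pos.2 (by nlinarith)
    have hSj : 0 < Real.sqrt (hypCosh Ij rk ri ^ 2 - 1) := Real.sqrt_pos.2 (by nlinarith)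
    have hSk : 0 < Real.sqrt (hypCosh Ik ri rj ^ 2 - 1) := Real.sqrt_pos.2 (by nlinarith)
    have hQ : (hypCosh Ii rj rk)^2 + (hypCosh Ij rk ri)^2 + (hypCosh Ik ri rj)^2
        ≤ 1 + 2*(hypCosh Ii rj rk)*(hypCosh Ij rk ri)*(hypCosh Ik ri rj) := by
      unfold hypCosh
      exact hyp_Q_nonpos Ii Ij Ik (Real.sinh ri) (Real.sinh rj) (Real.sinh rk)
        (Real.cosh ri) (Real.cosh rj) (Real.cosh rk)
        (by positivity) (by positivity) (by positivity)
        (Real.cosh_pos ri).le (Real.cosh_pos rj).le (Real.cosh_pos rk).le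
        (Real.cosh_sq ri) (Real.cosh_sq rj) (Real.cosh_sq rk)
        hIiabs hIjabs hIkabs hξi hξj hξk
    exact tri_bounds (hypCosh Ii rj rk) (hypCosh Ij rk ri) (hypCosh Ik ri rj)
      (Real.sqrt (hypCosh Ii rj rk ^ 2 - 1)) (Real.sqrt (hypCosh Ij rk ri ^ 2 - 1))
      (Real.sqrt (hypCosh Ik ri rj ^ 2 - 1)) h1i h1j h1k ESi ESj ESk hSi hSj hSk hQ
  -- continuity / limit of the majorant g
  have hcCi : Continuous (fun p : ℝ × ℝ × ℝ => hypCosh Ii p.2.1 p.2.2) := by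
    unfold hypCosh; fun_prop
  have hcCj : Continuous (fun p : ℝ × ℝ × ℝ => hypCosh Ij p.2.2 p.1) := by
    unfold hypCosh; fun_prop
  have hcCk : Continuous (fun p : ℝ × ℝ × ℝ => hypCosh Ik p.1 p.2.1) := by
    unfold hypCosh; fun_prop
  have hcSi : Continuous (fun p : ℝ × ℝ × ℝ => Real.sqrt (hypCosh Ii p.2.1 p.2.2 ^ 2 - 1)) :=
    Real.continuous_sqrt.comp ((hcCi.pow 2).sub continuous_const)
  have hcSj : Continuous (fun p : ℝ × ℝ × ℝ => Real.sqrt (hypCosh Ij p.2.2 p.1 ^ 2 - 1)) :=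
    Real.continuous_sqrt.comp ((hcCj.pow 2).sub continuous_const)
  have hcSk : Continuous (fun p : ℝ × ℝ × ℝ => Real.sqrt (hypCosh Ik p.1 p.2.1 ^ 2 - 1)) :=
    Real.continuous_sqrt.comp ((hcCk.pow 2).sub continuous_const)
  have hCiq : hypCosh Ii 0 c = Real.cosh c := by simp [hypCosh]
  have hCjq : hypCosh Ij c 0 = Real.cosh c := by simp [hypCosh]
  have hCkq : hypCosh Ik 0 0 = 1 := by simp [hypCosh]
  have hsq : Real.sqrt (Real.cosh c ^ 2 - 1) = Real.sinh c := by
    rw [show Real.cosh c ^ 2 - 1 = Real.sinh c ^ 2 by rw [Real.cosh_sq]; ring]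
    exact Real.sqrt_sq (by positivity)
  have htg : Filter.Tendsto g F (nhds 0) := by
    have hnum : Continuous (fun p : ℝ × ℝ × ℝ =>
        (Real.sqrt (hypCosh Ii p.2.1 p.2.2 ^ 2 - 1) * hypCosh Ij p.2.2 p.1 +
         Real.sqrt (hypCosh Ij p.2.2 p.1 ^ 2 - 1) * hypCosh Ii p.2.1 p.2.2) *
         Real.sqrt (hypCosh Ik p.1 p.2.1 ^ 2 - 1)) :=
      ((hcSi.mul hcCj).add (hcSj.mul hcCi)).mul hcSk
    have hden : Continuous (fun p : ℝ × ℝ × ℝ =>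
        Real.sqrt (hypCosh Ii p.2.1 p.2.2 ^ 2 - 1) * Real.sqrt (hypCosh Ij p.2.2 p.1 ^ 2 - 1) *
        (hypCosh Ik p.1 p.2.1 + 1)) :=
      (hcSi.mul hcSj).mul (hcCk.add continuous_const)
    have hden_ne : Real.sqrt (hypCosh Ii (0:ℝ) c ^ 2 - 1) *
        Real.sqrt (hypCosh Ij c (0:ℝ) ^ 2 - 1) * (hypCosh Ik (0:ℝ) (0:ℝ) + 1) ≠ 0 := by
      rw [hCiq, hCjq, hCkq, hsq]
      positivity
    have hCA : ContinuousAt g ((0:ℝ), (0:ℝ), c) :=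
      ContinuousAt.div hnum.continuousAt hden.continuousAt hden_ne
    have h0 : g ((0:ℝ), (0:ℝ), c) = 0 := by
      have hk0 : Real.sqrt (hypCosh Ik (0:ℝ) (0:ℝ) ^ 2 - 1) = 0 := by
        rw [hCkq]; norm_num
      simp [hgdef, hk0]
    have := hCA.tendsto
    rw [h0] at this
    exact this.mono_left nhdsWithin_le_nhds
  have hev : ∀ᶠ p in F, p ∈ Sset := eventually_mem_nhdsWithin
  have hAB : Filter.Tendsto (fun p => A p + B p) F (nhds 0) :=
    tendsto_of_tendsto_of_tendsto_of_le_of_le' tendsto_const_nhds htg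
      (hev.mono fun p hp => (hkey p hp).2.2.1) (hev.mono fun p hp => (hkey p hp).2.2.2)
  set θ : ℝ × ℝ × ℝ → ℝ := fun p => Real.arccos (A p) + Real.arccos (B p) with hθdef
  have hub : ∀ᶠ p in F, Real.cos (θ p) ≤ (A p + B p) - 1 := hev.mono (fun p hp => by
    obtain ⟨hA1, hB1, hab0, _⟩ := hkey p hp
    obtain ⟨hA1a, hA1b⟩ := abs_le.1 hA1
    obtain ⟨hB1a, hB1b⟩ := abs_le.1 hB1
    have h := cos_sum_bound (Real.arccos_nonneg (A p)) (Real.arccos_le_pi (A p))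
      (Real.arccos_nonneg (B p)) (Real.arccos_le_pi (B p))
    rw [Real.cos_arccos hA1a hA1b, Real.cos_arccos hB1a hB1b, abs_of_nonneg hab0] at h
    simp only [hθdef]
    linarith)
  have hcosθ : Filter.Tendsto (fun p => Real.cos (θ p)) F (nhds (-1)) := by
    have h2 : Filter.Tendsto (fun p => (A p + B p) - 1) F (nhds (0 - 1)) := hAB.sub_const 1
    norm_num at h2
    exact tendsto_of_tendsto_of_tendsto_of_le_of_le' tendsto_const_nhds h2
      (Filter.Eventually.of_forall fun p => Real.neg_one_le_cos _) hub
  have habs : ∀ p, |θ p - Real.pi| = Real.arccos (-Real.cos (θ p)) := by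
    intro p
    have h1 := Real.arccos_nonneg (A p)
    have h2 := Real.arccos_le_pi (A p)
    have h3 := Real.arccos_nonneg (B p)
    have h4 := Real.arccos_le_pi (B p)
    have hb : |θ p - Real.pi| ≤ Real.pi := by
      rw [abs_le]; constructor <;> simp only [hθdef] <;> linarith
    have hc2 : Real.cos |θ p - Real.pi| = -Real.cos (θ p) := by
      rw [Real.cos_abs, Real.cos_sub, Real.cos_pi, Real.sin_pi]; ring
    rw [← hc2, Real.arccos_cos (abs_nonneg _) hb]
  have htd : Filter.Tendsto (fun p => |θ p - Real.pi|) F (nhds 0) := by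
    have harc : Filter.Tendsto (fun p => Real.arccos (-Real.cos (θ p))) F
        (nhds (Real.arccos (-(-1)))) :=
      (Real.continuous_arccos.continuousAt).tendsto.comp hcosθ.neg
    norm_num [Real.arccos_one] at harc
    exact harc.congr fun p => (habs p).symm
  have hθπ : Filter.Tendsto θ F (nhds Real.pi) := by
    apply tendsto_iff_dist_tendsto_zero.2
    simpa [Real.dist_eq] using htd
  exact hθπ.congr fun p => by simp only [hθdef, hAdef, hBdef, hypAngle]
end

section
/- Assume ξ_i ≥ 0, ξ_j ≥ 0, ξ_k ≥ 0. For every ε > 0 there exists L > 0 such that for all positive reals r_i, r_j, r_k with r_i > L, the hyperbolic inner angle satisfies ϑ_i(r_i, r_j, r_k) < ε. In particular, for any fixed r_j, r_k > 0, ϑ_i(r_i, r_j, r_k) tends to 0 as r_i tends to +∞. -/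
open Real

private lemma arccos_lt_of_cos_lt {x e : ℝ} (he : 0 < e) (heπ : e ≤ π)
    (h : Real.cos e < x) : Real.arccos x < e := by
  rcases le_or_gt 1 x with hx | hx
  · rw [Real.arccos_eq_zero.mpr hx]; exact he
  · by_contra hc
    push_neg at hc
    have h1 : Real.cos (Real.arccos x) ≤ Real.cos e :=
      Real.cos_le_cos_of_nonneg_of_le_pi he.le (Real.arccos_le_pi x) hc
    have h2 : Real.cos (Real.arccos x) = x :=
      Real.cos_arccos (by linarith [Real.neg_one_le_cos e]) hx.le
    linarith

private lemma aux_me (u e e' : ℝ) (hu0 : 0 < u) (he'0 : 0 < e') :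
    u / 4 * e ≤ u / 2 * ((e + e') / 2) := by nlinarith [mul_pos hu0 he'0]

private lemma aux_dm (δ m : ℝ) (hδ0 : 0 < δ) (hm1 : 1 ≤ m) (h : 8 / δ ≤ m) :
    8 ≤ δ * m ^ 2 := by
  have h8 : 8 ≤ δ * m := by
    rw [div_le_iff₀ hδ0] at h; nlinarith
  nlinarith

private lemma aux_stc (t u e e' : ℝ) (ht0 : 0 ≤ t) (ht1 : t < 1) (h2u : 2 * u = 1 - t)
    (he'0 : 0 < e') (he'1 : e' ≤ 1) (hue : 4 < u * e) :
    t * ((e + e') / 2) + u / 2 * ((e + e') / 2) ≤ (e - e') / 2 := by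
  have huu : u = (1 - t) / 2 := by linarith
  subst huu
  nlinarith [mul_nonneg ht0 he'0.le, mul_le_mul_of_nonneg_left he'1 ht0]

private lemma aux_sq {m : ℝ} (h : 1 ≤ m) : 1 ≤ m ^ 2 := by nlinarith

private lemma aux_mul_sq {a b : ℝ} (h : a ≤ b) (ha : 0 ≤ a) : a ^ 2 ≤ b ^ 2 := by nlinarith

private lemma aux_sqb (B skv ckv Ijv q : ℝ) (hq0 : 0 < q) (hIj2 : Ijv ^ 2 ≤ 1)
    (hsk : skv ^ 2 ≤ ckv ^ 2) (hck : ckv ^ 2 ≤ 2 * q * B ^ 2) :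
    B ^ 2 + (1 - Ijv ^ 2) * skv ^ 2 ≤ (B * (1 + q)) ^ 2 := by
  nlinarith [sq_nonneg (B * q), sq_nonneg skv, mul_nonneg (sq_nonneg Ijv) (sq_nonneg skv)]

private lemma aux_sq_le_one {a : ℝ} (ha1 : -1 < a) (ha2 : a ≤ 1) : a ^ 2 ≤ 1 := by
  nlinarith

private lemma aux_prod_le_one {a b : ℝ} (ha1 : -1 < a) (ha2 : a ≤ 1) (hb1 : -1 < b)
    (hb2 : b ≤ 1) : a * b ≤ 1 := by nlinarith

private lemma aux_br (δ q : ℝ) (hq0 : 0 < q) (hq12 : q ≤ 1 / 2) (hqδ : 16 * q ≤ δ)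
    (hδ1 : δ ≤ 1) : (1 - δ) * (1 + q) ^ 2 < 1 - 4 * q := by
  nlinarith [sq_nonneg (1 + q), mul_pos hq0 hq0]

set_option maxHeartbeats 1000000 in
private lemma key_est (Ii Ij Ik : ℝ) (hIi : |Ii| ≤ 1) (hIj1 : -1 < Ij) (hIj2 : Ij ≤ 1)
    (hIk1 : -1 < Ik) (hIk2 : Ik ≤ 1) (δ : ℝ) (hδ0 : 0 < δ) (hδ1 : δ ≤ 1) :
    ∃ L > (0 : ℝ), ∀ ri rj rk : ℝ, 0 < ri → 0 < rj → 0 < rk → L < ri →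
      1 - δ < (hypCosh Ij rk ri * hypCosh Ik ri rj - hypCosh Ii rj rk) /
        (Real.sqrt (hypCosh Ij rk ri ^ 2 - 1) * Real.sqrt (hypCosh Ik ri rj ^ 2 - 1)) := by
  set t : ℝ := max (max (-Ij) (-Ik)) 0 with ht
  have ht0 : 0 ≤ t := le_max_right _ 0
  have ht1 : t < 1 :=
    max_lt (max_lt (by linarith) (by linarith)) one_pos
  have htIj : -Ij ≤ t := le_trans (le_max_left _ _) (le_max_left _ _)
  have htIk : -Ik ≤ t := le_trans (le_max_right _ _) (le_max_left _ _)
  set u : ℝ := (1 - t) / 2 with hu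
  have hu0 : 0 < u := by rw [hu]; linarith
  have h2u : 2 * u = 1 - t := by rw [hu]; ring
  clear_value u
  clear hu
  set M : ℝ := (4 / u) * (1 + 8 / δ) with hM
  have hM0 : 0 < M := by positivity
  have hMval : u / 4 * M = 1 + 8 / δ := by
    rw [hM]; field_simp
  clear_value M
  clear hM ht
  clear_value t
  refine ⟨max 1 (Real.log M), lt_of_lt_of_le one_pos (le_max_left _ _), ?_⟩
  intro ri rj rk hri hrj hrk hLri
  have hexpM : M < Real.exp ri := by
    calc M = Real.exp (Real.log M) := (Real.exp_log hM0).symm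
    _ ≤ Real.exp (max 1 (Real.log M)) := Real.exp_le_exp.mpr (le_max_right _ _)
    _ < Real.exp ri := Real.exp_lt_exp.mpr hLri
  set e := Real.exp ri with he
  set e' := Real.exp (-ri) with he'
  have he'0 : 0 < e' := Real.exp_pos _
  have he'1 : e' ≤ 1 := Real.exp_le_one_iff.mpr (by linarith)
  set s := Real.sinh ri with hs
  set c := Real.cosh ri with hc
  have hseq : s = (e - e') / 2 := Real.sinh_eq ri
  have hceq : c = (e + e') / 2 := Real.cosh_eq ri
  have hc1 : 1 ≤ c := Real.one_le_cosh ri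
  have hcsq : c ^ 2 = s ^ 2 + 1 := Real.cosh_sq ri
  set sj := Real.sinh rj with hsj
  set cj := Real.cosh rj with hcj
  set sk := Real.sinh rk with hsk
  set ck := Real.cosh rk with hck
  have hsj0 : 0 < sj := Real.sinh_pos_iff.mpr hrj
  have hsk0 : 0 < sk := Real.sinh_pos_iff.mpr hrk
  have hcj1 : 1 ≤ cj := Real.one_le_cosh rj
  have hck1 : 1 ≤ ck := Real.one_le_cosh rk
  have hcjsq : cj ^ 2 = sj ^ 2 + 1 := Real.cosh_sq rj
  have hcksq : ck ^ 2 = sk ^ 2 + 1 := Real.cosh_sq rk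
  have hsjcj : sj ≤ cj := (Real.sinh_lt_cosh rj).le
  have hskck : sk ≤ ck := (Real.sinh_lt_cosh rk).le
  have hc0 : (0 : ℝ) < c := by linarith
  -- size facts about m := u/2 * c
  set m : ℝ := u / 2 * c with hm
  have hm0 : 0 < m := by positivity
  have hu4e : 1 + 8 / δ ≤ u / 4 * e := by
    have h1 : u / 4 * M ≤ u / 4 * e := mul_le_mul_of_nonneg_left hexpM.le (by positivity)
    linarith [hMval]
  have hme : u / 4 * e ≤ m := by
    rw [hm, hceq]; exact aux_me u e e' hu0 he'0
  have h8δ : 0 < 8 / δ := by positivity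
  have hm1 : 1 ≤ m := by linarith
  have h8δm : 8 / δ ≤ m := by linarith
  have hδm : 8 ≤ δ * m ^ 2 := aux_dm δ m hδ0 hm1 h8δm
  have hue : 4 < u * e := by
    have h1 : u * e = 4 * (u / 4 * e) := by ring
    linarith
  have hstc : t * c + m ≤ s := by
    rw [hm, hceq, hseq]; exact aux_stc t u e e' ht0 ht1 h2u he'0 he'1 hue
  set A : ℝ := s * cj + Ik * c * sj with hA
  set B : ℝ := s * ck + Ij * c * sk with hB
  have hmcjA : m * cj ≤ A := by
    have h1 : -t * (c * sj) ≤ Ik * (c * sj) :=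
      mul_le_mul_of_nonneg_right (by linarith) (by positivity)
    have h2 : t * (c * sj) ≤ t * (c * cj) :=
      mul_le_mul_of_nonneg_left (mul_le_mul_of_nonneg_left hsjcj hc0.le) ht0
    have h3 : (t * c + m) * cj ≤ s * cj := mul_le_mul_of_nonneg_right hstc (by positivity)
    have h4 : (t * c + m) * cj = t * (c * cj) + m * cj := by ring
    rw [hA]; linarith
  have hmckB : m * ck ≤ B := by
    have h1 : -t * (c * sk) ≤ Ij * (c * sk) :=
      mul_le_mul_of_nonneg_right (by linarith) (by positivity)
    have h2 : t * (c * sk) ≤ t * (c * ck) :=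
      mul_le_mul_of_nonneg_left (mul_le_mul_of_nonneg_left hskck hc0.le) ht0
    have h3 : (t * c + m) * ck ≤ s * ck := mul_le_mul_of_nonneg_right hstc (by positivity)
    have h4 : (t * c + m) * ck = t * (c * ck) + m * ck := by ring
    rw [hB]; linarith
  have hA0 : 0 < A := lt_of_lt_of_le (by positivity) hmcjA
  have hB0 : 0 < B := lt_of_lt_of_le (by positivity) hmckB
  -- identities
  have hCjdef : hypCosh Ij rk ri = ck * c + Ij * sk * s := rfl
  have hCkdef : hypCosh Ik ri rj = c * cj + Ik * s * sj := rfl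
  have hCidef : hypCosh Ii rj rk = cj * ck + Ii * sj * sk := rfl
  have hCj : hypCosh Ij rk ri ^ 2 - 1 = B ^ 2 + (1 - Ij ^ 2) * sk ^ 2 := by
    rw [hCjdef, hB]
    linear_combination (ck ^ 2 - Ij ^ 2 * sk ^ 2) * hcsq + hcksq
  have hCk : hypCosh Ik ri rj ^ 2 - 1 = A ^ 2 + (1 - Ik ^ 2) * sj ^ 2 := by
    rw [hCkdef, hA]
    linear_combination (cj ^ 2 - Ik ^ 2 * sj ^ 2) * hcsq + hcjsq
  have hN : hypCosh Ij rk ri * hypCosh Ik ri rj - hypCosh Ii rj rk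
      = A * B - (Ii + Ij * Ik) * (sj * sk) := by
    rw [hCjdef, hCkdef, hCidef, hA, hB]
    linear_combination (cj * ck - Ij * Ik * sj * sk) * hcsq
  -- q setup
  set q : ℝ := 1 / (2 * m ^ 2) with hq
  have hq0 : 0 < q := by positivity
  have h2q : 2 * m ^ 2 * q = 1 := by rw [hq]; field_simp
  have hmsq1 : 1 ≤ m ^ 2 := aux_sq hm1
  have hq12 : q ≤ 1 / 2 := by
    rw [hq]
    exact one_div_le_one_div_of_le (by norm_num) (by linarith)
  have hqδ : 16 * q ≤ δ := by
    have h2m : (0 : ℝ) < 2 * m ^ 2 := by positivity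
    rw [hq, mul_one_div, div_le_iff₀ h2m]
    have h1 : δ * (2 * m ^ 2) = 2 * (δ * m ^ 2) := by ring
    linarith
  -- sqrt bounds
  have hBsq : m ^ 2 * ck ^ 2 ≤ B ^ 2 := by
    have h1 := aux_mul_sq hmckB (by positivity)
    have h2 : (m * ck) ^ 2 = m ^ 2 * ck ^ 2 := by ring
    linarith
  have hAsq : m ^ 2 * cj ^ 2 ≤ A ^ 2 := by
    have h1 := aux_mul_sq hmcjA (by positivity)
    have h2 : (m * cj) ^ 2 = m ^ 2 * cj ^ 2 := by ring
    linarith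
  have hBub : ck ^ 2 ≤ 2 * q * B ^ 2 := by
    have h1 : 2 * q * (m ^ 2 * ck ^ 2) ≤ 2 * q * B ^ 2 :=
      mul_le_mul_of_nonneg_left hBsq (by positivity)
    have h2 : 2 * q * (m ^ 2 * ck ^ 2) = (2 * m ^ 2 * q) * ck ^ 2 := by ring
    rw [h2, h2q, one_mul] at h1; exact h1
  have hAub : cj ^ 2 ≤ 2 * q * A ^ 2 := by
    have h1 : 2 * q * (m ^ 2 * cj ^ 2) ≤ 2 * q * A ^ 2 :=
      mul_le_mul_of_nonneg_left hAsq (by positivity)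
    have h2 : 2 * q * (m ^ 2 * cj ^ 2) = (2 * m ^ 2 * q) * cj ^ 2 := by ring
    rw [h2, h2q, one_mul] at h1; exact h1
  have hsksq : sk ^ 2 ≤ ck ^ 2 := by linarith
  have hsjsq : sj ^ 2 ≤ cj ^ 2 := by linarith
  have hsqrtj : Real.sqrt (hypCosh Ij rk ri ^ 2 - 1) ≤ B * (1 + q) := by
    rw [hCj]
    have hle : B ^ 2 + (1 - Ij ^ 2) * sk ^ 2 ≤ (B * (1 + q)) ^ 2 :=
      aux_sqb B sk ck Ij q hq0 (aux_sq_le_one hIj1 hIj2) hsksq hBub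
    calc Real.sqrt (B ^ 2 + (1 - Ij ^ 2) * sk ^ 2) ≤ Real.sqrt ((B * (1 + q)) ^ 2) :=
          Real.sqrt_le_sqrt hle
    _ = B * (1 + q) := Real.sqrt_sq (by positivity)
  have hsqrtk : Real.sqrt (hypCosh Ik ri rj ^ 2 - 1) ≤ A * (1 + q) := by
    rw [hCk]
    have hle : A ^ 2 + (1 - Ik ^ 2) * sj ^ 2 ≤ (A * (1 + q)) ^ 2 :=
      aux_sqb A sj cj Ik q hq0 (aux_sq_le_one hIk1 hIk2) hsjsq hAub
    calc Real.sqrt (A ^ 2 + (1 - Ik ^ 2) * sj ^ 2) ≤ Real.sqrt ((A * (1 + q)) ^ 2) :=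
          Real.sqrt_le_sqrt hle
    _ = A * (1 + q) := Real.sqrt_sq (by positivity)
  have hsqrtjlb : B ≤ Real.sqrt (hypCosh Ij rk ri ^ 2 - 1) := by
    rw [hCj]
    have h1 : 0 ≤ (1 - Ij ^ 2) * sk ^ 2 :=
      mul_nonneg (by linarith [aux_sq_le_one hIj1 hIj2]) (sq_nonneg sk)
    calc B = Real.sqrt (B ^ 2) := (Real.sqrt_sq hB0.le).symm
    _ ≤ _ := Real.sqrt_le_sqrt (by linarith)
  have hsqrtklb : A ≤ Real.sqrt (hypCosh Ik ri rj ^ 2 - 1) := by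
    rw [hCk]
    have h1 : 0 ≤ (1 - Ik ^ 2) * sj ^ 2 :=
      mul_nonneg (by linarith [aux_sq_le_one hIk1 hIk2]) (sq_nonneg sj)
    calc A = Real.sqrt (A ^ 2) := (Real.sqrt_sq hA0.le).symm
    _ ≤ _ := Real.sqrt_le_sqrt (by linarith)
  set D := Real.sqrt (hypCosh Ij rk ri ^ 2 - 1) * Real.sqrt (hypCosh Ik ri rj ^ 2 - 1)
  have hD0 : 0 < D :=
    lt_of_lt_of_le (mul_pos hB0 hA0)
      (mul_le_mul hsqrtjlb hsqrtklb hA0.le (Real.sqrt_nonneg _))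
  rw [lt_div_iff₀ hD0]
  have hDub : D ≤ (B * (1 + q)) * (A * (1 + q)) :=
    mul_le_mul hsqrtj hsqrtk (Real.sqrt_nonneg _) (by positivity)
  have habs : Ii + Ij * Ik ≤ 2 := by
    have h1 := abs_le.mp hIi
    have h2 : Ij * Ik ≤ 1 := aux_prod_le_one hIj1 hIj2 hIk1 hIk2
    linarith [h1.2]
  have hsjskle : sj * sk ≤ cj * ck :=
    mul_le_mul hsjcj hskck hsk0.le (by positivity)
  have hNlb : A * B - 2 * (cj * ck) ≤
      hypCosh Ij rk ri * hypCosh Ik ri rj - hypCosh Ii rj rk := by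
    rw [hN]
    have hst : 0 ≤ sj * sk := by positivity
    have h5 : (Ii + Ij * Ik) * (sj * sk) ≤ 2 * (sj * sk) :=
      mul_le_mul_of_nonneg_right habs hst
    linarith
  have hcjck : 2 * (cj * ck) ≤ 4 * q * (A * B) := by
    have h1 : (m * cj) * (m * ck) ≤ A * B :=
      mul_le_mul hmcjA hmckB (by positivity) hA0.le
    have h2 : 4 * q * ((m * cj) * (m * ck)) ≤ 4 * q * (A * B) :=
      mul_le_mul_of_nonneg_left h1 (by positivity)
    have h3 : 4 * q * ((m * cj) * (m * ck)) = 2 * (2 * m ^ 2 * q) * (cj * ck) := by ring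
    rw [h3, h2q] at h2; linarith
  have hbr : (1 - δ) * (1 + q) ^ 2 < 1 - 4 * q := aux_br δ q hq0 hq12 hqδ hδ1
  calc (1 - δ) * D ≤ (1 - δ) * ((B * (1 + q)) * (A * (1 + q))) :=
        mul_le_mul_of_nonneg_left hDub (by linarith)
  _ = ((1 - δ) * (1 + q) ^ 2) * (A * B) := by ring
  _ < (1 - 4 * q) * (A * B) := mul_lt_mul_of_pos_right hbr (mul_pos hA0 hB0)
  _ = A * B - 4 * q * (A * B) := by ring
  _ ≤ A * B - 2 * (cj * ck) := by linarith
  _ ≤ _ := hNlb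
theorem stmt_16 (Θi Θj Θk : ℝ)
    (hi0 : 0 ≤ Θi) (hi1 : Θi < Real.pi)
    (hj0 : 0 ≤ Θj) (hj1 : Θj < Real.pi)
    (hk0 : 0 ≤ Θk) (hk1 : Θk < Real.pi)
    (hξi : 0 ≤ Real.cos Θi + Real.cos Θj * Real.cos Θk)
    (hξj : 0 ≤ Real.cos Θj + Real.cos Θk * Real.cos Θi)
    (hξk : 0 ≤ Real.cos Θk + Real.cos Θi * Real.cos Θj) :
    (∀ ε > (0 : ℝ), ∃ L > (0 : ℝ), ∀ ri rj rk : ℝ, 0 < ri → 0 < rj → 0 < rk → L < ri →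
      hypAngle (Real.cos Θi) (Real.cos Θj) (Real.cos Θk) ri rj rk < ε) ∧
    ∀ rj rk : ℝ, 0 < rj → 0 < rk →
      Filter.Tendsto (fun ri => hypAngle (Real.cos Θi) (Real.cos Θj) (Real.cos Θk) ri rj rk)
        Filter.atTop (nhds 0) := by
  have hIi1 : |Real.cos Θi| ≤ 1 := Real.abs_cos_le_one Θi
  have hIj1 : -1 < Real.cos Θj := by
    have h := Real.strictAntiOn_cos ⟨hj0, hj1.le⟩ ⟨Real.pi_pos.le, le_refl _⟩ hj1
    rwa [Real.cos_pi] at h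
  have hIk1 : -1 < Real.cos Θk := by
    have h := Real.strictAntiOn_cos ⟨hk0, hk1.le⟩ ⟨Real.pi_pos.le, le_refl _⟩ hk1
    rwa [Real.cos_pi] at h
  have part1 : ∀ ε > (0 : ℝ), ∃ L > (0 : ℝ), ∀ ri rj rk : ℝ,
      0 < ri → 0 < rj → 0 < rk → L < ri →
      hypAngle (Real.cos Θi) (Real.cos Θj) (Real.cos Θk) ri rj rk < ε := by
    intro ε hε
    set ε' := min ε Real.pi with hε'
    have hε'0 : 0 < ε' := lt_min hε Real.pi_pos
    have hε'π : ε' ≤ Real.pi := min_le_right _ _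
    have hcos1 : Real.cos ε' < 1 := by
      have h := Real.strictAntiOn_cos ⟨le_refl (0:ℝ), Real.pi_pos.le⟩ ⟨hε'0.le, hε'π⟩ hε'0
      rwa [Real.cos_zero] at h
    set δ := min (1 - Real.cos ε') 1 with hδ
    have hδ0 : 0 < δ := lt_min (by linarith) one_pos
    have hδ1 : δ ≤ 1 := min_le_right _ _
    obtain ⟨L, hL0, hest⟩ := key_est (Real.cos Θi) (Real.cos Θj) (Real.cos Θk) hIi1 hIj1
      (Real.cos_le_one Θj) hIk1 (Real.cos_le_one Θk) δ hδ0 hδ1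
    refine ⟨L, hL0, ?_⟩
    intro ri rj rk h1 h2 h3 h4
    have hX := hest ri rj rk h1 h2 h3 h4
    have hcosX : Real.cos ε' <
        (hypCosh (Real.cos Θj) rk ri * hypCosh (Real.cos Θk) ri rj -
          hypCosh (Real.cos Θi) rj rk) /
        (Real.sqrt (hypCosh (Real.cos Θj) rk ri ^ 2 - 1) *
          Real.sqrt (hypCosh (Real.cos Θk) ri rj ^ 2 - 1)) := by
      have hle : δ ≤ 1 - Real.cos ε' := min_le_left _ _
      linarith
    calc hypAngle (Real.cos Θi) (Real.cos Θj) (Real.cos Θk) ri rj rk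
        < ε' := arccos_lt_of_cos_lt hε'0 hε'π hcosX
    _ ≤ ε := min_le_left _ _
  refine ⟨part1, ?_⟩
  intro rj rk hrj hrk
  rw [Metric.tendsto_atTop]
  intro ε hε
  obtain ⟨L, hL0, hest⟩ := part1 ε hε
  refine ⟨L + 1, fun ri hri => ?_⟩
  have h1 : (0:ℝ) < ri := by linarith
  have h2 : L < ri := by linarith
  have h3 := hest ri rj rk h1 hrj hrk h2
  have h0 : 0 ≤ hypAngle (Real.cos Θi) (Real.cos Θj) (Real.cos Θk) ri rj rk :=
    Real.arccos_nonneg _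
  rw [Real.dist_eq, sub_zero, abs_of_nonneg h0]
  exact h3
end
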